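/- Let r(x) = α|x| + (η/2)x² be the elastic net with α, η ≥ 0 and let ŵ, v̂, τ̂ > 0, θ₀ > 0, and β₀ a random variable with P(β₀ = 0) = 1−ν and conditionally N(0, θ₀²/ν) with probability ν, independent of Z ~ N(0,1). Then E_{Z,β₀}[prox'_r(ŵβ₀/θ₀ + v̂Z, τ̂)] = (1/(1+ητ̂))·(ν·Φ̄(χ₁) + (1−ν)·Φ̄(χ₀))·2, where χ₀ = ατ̂/v̂ and χ₁ = ατ̂/√(v̂² + ŵ²/ν). -/

import Mathlib

open MeasureTheory ProbabilityTheory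

noncomputable def gaussPDF (t : ℝ) : ℝ := Real.exp (-t ^ 2 / 2) / Real.sqrt (2 * Real.pi)

noncomputable def PhiBar (x : ℝ) : ℝ := ∫ t in Set.Ici x, gaussPDF t

/-- Derivative (a.e.) of the elastic-net proximal map. -/
noncomputable def proxEnetDeriv (α η τ x : ℝ) : ℝ :=
  (if α * τ < |x| then 1 else 0) / (1 + η * τ)

open Real Set
open scoped ENNReal NNReal

lemma phiBar_def (x : ℝ) : PhiBar x = ∫ t in Set.Ici x, gaussPDF t := rfl

lemma gaussPDF_eq (t : ℝ) : gaussPDF t = (Real.sqrt (2 * π))⁻¹ * Real.exp (-(1/2) * t ^ 2) := by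
  unfold gaussPDF; rw [div_eq_inv_mul]; ring_nf

lemma continuous_gaussPDF : Continuous gaussPDF := by
  unfold gaussPDF; fun_prop

lemma gaussPDF_nonneg (t : ℝ) : 0 ≤ gaussPDF t := by
  unfold gaussPDF; positivity

lemma gaussPDF_neg (t : ℝ) : gaussPDF (-t) = gaussPDF t := by
  simp [gaussPDF]

lemma integrable_gaussPDF : Integrable gaussPDF := by
  have h := (integrable_exp_neg_mul_sq (b := 1/2) (by norm_num)).const_mul (Real.sqrt (2 * π))⁻¹
  have he : gaussPDF = fun t => (Real.sqrt (2 * π))⁻¹ * Real.exp (-(1/2) * t ^ 2) :=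
    funext gaussPDF_eq
  rw [he]; exact h

lemma phiBar_nonneg (x : ℝ) : 0 ≤ PhiBar x :=
  setIntegral_nonneg measurableSet_Ici fun t _ => gaussPDF_nonneg t

lemma phiBar_antitone : Antitone PhiBar := by
  intro x y h
  exact setIntegral_mono_set integrable_gaussPDF.integrableOn
    (Filter.Eventually.of_forall fun t => gaussPDF_nonneg t)
    (HasSubset.Subset.eventuallyLE (Ici_subset_Ici.mpr h))

lemma measurable_phiBar : Measurable PhiBar := phiBar_antitone.measurable

lemma phiBar_le (x : ℝ) : PhiBar x ≤ ∫ t, gaussPDF t :=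
  setIntegral_le_integral integrable_gaussPDF
    (Filter.Eventually.of_forall fun t => gaussPDF_nonneg t)

lemma integral_gaussianReal_one (g : ℝ → ℝ) :
    ∫ x, g x ∂(gaussianReal 0 1) = ∫ x, gaussPDF x * g x := by
  rw [gaussianReal_of_var_ne_zero 0 one_ne_zero]
  have hpdf : gaussianPDF 0 1 = fun x => ((Real.toNNReal (gaussPDF x)) : ℝ≥0∞) := by
    funext x
    rw [gaussianPDF]
    have : gaussianPDFReal 0 1 x = gaussPDF x := by
      simp only [gaussianPDFReal, gaussPDF, NNReal.coe_one, mul_one, sub_zero]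
      rw [div_eq_inv_mul]
      rw [show Real.sqrt (2 * π) = Real.sqrt 2 * Real.sqrt π from
        Real.sqrt_mul (by norm_num) π]
      rw [mul_inv]
      ring_nf
    rw [this, ENNReal.ofReal]
  rw [hpdf, integral_withDensity_eq_integral_smul
    (continuous_gaussPDF.measurable.real_toNNReal) g]
  congr 1; funext x
  rw [NNReal.smul_def, Real.coe_toNNReal _ (gaussPDF_nonneg x), smul_eq_mul]

lemma gaussPDF_conv (p s : ℝ) :
    ∫ z, gaussPDF z * gaussPDF (s + p * z)
      = (Real.sqrt (1 + p ^ 2))⁻¹ * gaussPDF (s / Real.sqrt (1 + p ^ 2)) := by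
  set k := 1 + p ^ 2 with hkdef
  have hk0 : 0 < k := by positivity
  have hk' : (1:ℝ) + p ^ 2 ≠ 0 := by positivity
  have h2π : (0:ℝ) < 2 * π := by positivity
  have hsq : Real.sqrt (2 * π) * Real.sqrt (2 * π) = 2 * π := Real.mul_self_sqrt h2π.le
  have step1 : ∀ z, gaussPDF z * gaussPDF (s + p * z)
      = (2 * π)⁻¹ * (Real.exp (-s ^ 2 / (2 * k)) * Real.exp (-(k / 2) * (z + p * s / k) ^ 2)) := by
    intro z
    unfold gaussPDF
    rw [div_mul_div_comm, hsq, ← Real.exp_add, ← Real.exp_add, div_eq_inv_mul]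
    congr 1
    congr 1
    rw [hkdef]
    field_simp
    ring
  simp_rw [step1]
  rw [integral_const_mul, integral_const_mul]
  have trans : (∫ z, Real.exp (-(k / 2) * (z + p * s / k) ^ 2)) = Real.sqrt (π / (k / 2)) := by
    rw [integral_add_right_eq_self (fun z => Real.exp (-(k / 2) * z ^ 2)) (p * s / k)]
    exact integral_gaussian (k / 2)
  rw [trans]
  have hh : Real.sqrt (π / (k / 2)) = Real.sqrt (2 * π) / Real.sqrt k := by
    rw [show π / (k / 2) = 2 * π / k by rw [div_div_eq_mul_div]; ring, Real.sqrt_div h2π.le]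
  rw [hh]
  unfold gaussPDF
  have h1 : (s / Real.sqrt k) ^ 2 = s ^ 2 / k := by
    rw [div_pow, Real.sq_sqrt hk0.le]
  rw [h1]
  have hsk : (0:ℝ) < Real.sqrt k := Real.sqrt_pos.mpr hk0
  have hs2π : (0:ℝ) < Real.sqrt (2 * π) := Real.sqrt_pos.mpr h2π
  rw [show -(s ^ 2 / k) / 2 = -s ^ 2 / (2 * k) by field_simp]
  field_simp
  have hs2 : Real.sqrt 2 * Real.sqrt π * (Real.sqrt 2 * Real.sqrt π) = 2 * π := by
    rw [← Real.sqrt_mul (by norm_num : (0:ℝ) ≤ 2) π]; exact hsq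
  linear_combination hsq

lemma integral_gaussPDF_gt (a : ℝ) :
    ∫ z, gaussPDF z * (if a < z then (1:ℝ) else 0) = PhiBar a := by
  have h : (fun z => gaussPDF z * (if a < z then (1:ℝ) else 0))
      = Set.indicator (Ioi a) gaussPDF := by
    funext z; simp [Set.indicator_apply, mem_Ioi, mul_ite]
  rw [h, integral_indicator measurableSet_Ioi, ← integral_Ici_eq_integral_Ioi, phiBar_def]

lemma integral_gaussPDF_lt (a : ℝ) :
    ∫ z, gaussPDF z * (if z < a then (1:ℝ) else 0) = PhiBar (-a) := by
  have h : (fun z => gaussPDF z * (if z < a then (1:ℝ) else 0))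
      = Set.indicator (Iio a) gaussPDF := by
    funext z; simp [Set.indicator_apply, mem_Iio, mul_ite]
  have h2 := integral_comp_neg_Ioi (-a) gaussPDF
  simp only [neg_neg] at h2
  rw [h, integral_indicator measurableSet_Iio, ← integral_Iic_eq_integral_Iio, ← h2,
    phiBar_def, integral_Ici_eq_integral_Ioi]
  simp_rw [gaussPDF_neg]

lemma integrable_gaussPDF_ite_gt (a : ℝ) :
    Integrable (fun z => gaussPDF z * (if a < z then (1:ℝ) else 0)) := by
  have h : (fun z => gaussPDF z * (if a < z then (1:ℝ) else 0))
      = Set.indicator (Ioi a) gaussPDF := by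
    funext z; simp [Set.indicator_apply, mem_Ioi, mul_ite]
  rw [h]; exact integrable_gaussPDF.indicator measurableSet_Ioi

lemma integrable_gaussPDF_ite_lt (a : ℝ) :
    Integrable (fun z => gaussPDF z * (if z < a then (1:ℝ) else 0)) := by
  have h : (fun z => gaussPDF z * (if z < a then (1:ℝ) else 0))
      = Set.indicator (Iio a) gaussPDF := by
    funext z; simp [Set.indicator_apply, mem_Iio, mul_ite]
  rw [h]; exact integrable_gaussPDF.indicator measurableSet_Iio

lemma integral_gaussPDF_abs_gt (c m s : ℝ) (hc : 0 ≤ c) (hs : 0 < s) :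
    ∫ z, gaussPDF z * (if c < |m + s * z| then (1:ℝ) else 0)
      = PhiBar ((c - m) / s) + PhiBar ((c + m) / s) := by
  have key : ∀ z, (if c < |m + s * z| then (1:ℝ) else 0)
      = (if (c - m)/s < z then (1:ℝ) else 0) + (if z < (-c - m)/s then (1:ℝ) else 0) := by
    intro z
    by_cases h1 : (c - m)/s < z
    · have h1' : c < m + s * z := by
        rw [div_lt_iff₀ hs] at h1; linarith
      by_cases h2 : z < (-c - m)/s
      · exfalso
        rw [lt_div_iff₀ hs] at h2; linarith
      · have : c < |m + s * z| := lt_of_lt_of_le h1' (le_abs_self _)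
        simp [this, h1, h2]
    · by_cases h2 : z < (-c - m)/s
      · have h2' : m + s * z < -c := by
          rw [lt_div_iff₀ hs] at h2; linarith
        have : c < |m + s * z| := by
          have := neg_le_abs (m + s * z)
          linarith
        simp [this, h1, h2]
      · have e1 : m + s * z ≤ c := by
          rw [not_lt, le_div_iff₀ hs] at h1; linarith
        have e2 : -c ≤ m + s * z := by
          rw [not_lt, div_le_iff₀ hs] at h2; linarith
        have : ¬ (c < |m + s * z|) := not_lt.mpr (abs_le.mpr ⟨e2, e1⟩)
        simp [this, h1, h2]
  simp_rw [key, mul_add]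
  rw [integral_add (integrable_gaussPDF_ite_gt _) (integrable_gaussPDF_ite_lt _),
    integral_gaussPDF_gt, integral_gaussPDF_lt]
  congr 1
  rw [show -((-c - m)/s) = (c + m)/s by ring]

lemma gauss_phiBar (p q : ℝ) :
    ∫ z, gaussPDF z * PhiBar (q + p * z) = PhiBar (q / Real.sqrt (1 + p ^ 2)) := by
  have hk0 : (0:ℝ) < 1 + p ^ 2 := by positivity
  have hsk : (0:ℝ) < Real.sqrt (1 + p ^ 2) := Real.sqrt_pos.mpr hk0
  set f : ℝ → ℝ → ℝ := fun z u =>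
    gaussPDF z * Set.indicator (Ici q) (fun u => gaussPDF (u + p * z)) u with hf
  -- Step A : PhiBar (q + p z) = ∫ u, indicator
  have stepA : ∀ z, PhiBar (q + p * z)
      = ∫ u, Set.indicator (Ici q) (fun u => gaussPDF (u + p * z)) u := by
    intro z
    have h1 := integral_add_right_eq_self (μ := volume)
      (fun t => Set.indicator (Ici (q + p * z)) gaussPDF t) (p * z)
    have h2 : (fun t => Set.indicator (Ici (q + p * z)) gaussPDF (t + p * z))
        = fun t => Set.indicator (Ici q) (fun u => gaussPDF (u + p * z)) t := by
      funext t
      simp only [Set.indicator_apply, mem_Ici, add_le_add_iff_right]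
    rw [phiBar_def, ← integral_indicator measurableSet_Ici, ← h1, h2]
  -- integrability of the unindicated product
  have hgm : AEStronglyMeasurable (fun zu : ℝ × ℝ => gaussPDF zu.1 * gaussPDF (zu.2 + p * zu.1))
      ((volume : Measure ℝ).prod volume) := by
    apply Continuous.aestronglyMeasurable
    exact (continuous_gaussPDF.comp continuous_fst).mul
      (continuous_gaussPDF.comp (continuous_snd.add (continuous_const.mul continuous_fst)))
  have hGint : Integrable (fun zu : ℝ × ℝ => gaussPDF zu.1 * gaussPDF (zu.2 + p * zu.1))
      ((volume : Measure ℝ).prod volume) := by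
    rw [integrable_prod_iff hgm]
    constructor
    · refine Filter.Eventually.of_forall fun z => ?_
      simpa using (integrable_gaussPDF.comp_add_right (p * z)).const_mul (gaussPDF z)
    · have : (fun z : ℝ => ∫ u, ‖gaussPDF z * gaussPDF (u + p * z)‖)
          = fun z => (∫ t, gaussPDF t) * gaussPDF z := by
        funext z
        have : ∀ u, ‖gaussPDF z * gaussPDF (u + p * z)‖ = gaussPDF z * gaussPDF (u + p * z) := by
          intro u
          rw [Real.norm_eq_abs, abs_of_nonneg (mul_nonneg (gaussPDF_nonneg _) (gaussPDF_nonneg _))]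
        simp_rw [this]
        rw [integral_const_mul, integral_add_right_eq_self (μ := volume) gaussPDF (p * z), mul_comm]
      rw [this]
      exact integrable_gaussPDF.const_mul _
  have hfint : Integrable (Function.uncurry f) ((volume : Measure ℝ).prod volume) := by
    have heq : Function.uncurry f
        = Set.indicator ((univ : Set ℝ) ×ˢ Ici q)
            (fun zu : ℝ × ℝ => gaussPDF zu.1 * gaussPDF (zu.2 + p * zu.1)) := by
      funext zu
      simp only [Function.uncurry, hf, Set.indicator_apply, Set.mem_prod, mem_univ, true_and,
        mem_Ici]
      by_cases h : q ≤ zu.2 <;> simp [h]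
    rw [heq]
    exact hGint.indicator (MeasurableSet.univ.prod measurableSet_Ici)
  calc ∫ z, gaussPDF z * PhiBar (q + p * z)
      = ∫ z, ∫ u, f z u := by
        congr 1; funext z
        rw [stepA z, hf, ← integral_const_mul]
    _ = ∫ u, ∫ z, f z u := integral_integral_swap hfint
    _ = ∫ u, Set.indicator (Ici q)
          (fun u => ∫ z, gaussPDF z * gaussPDF (u + p * z)) u := by
        congr 1; funext u
        by_cases h : u ∈ Ici q
        · simp only [hf, Set.indicator_of_mem h]
        · simp only [hf, Set.indicator_of_notMem h, mul_zero, integral_zero]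
    _ = ∫ u in Ici q, (Real.sqrt (1 + p ^ 2))⁻¹ * gaussPDF (u / Real.sqrt (1 + p ^ 2)) := by
        rw [integral_indicator measurableSet_Ici]
        congr 1; funext u; exact gaussPDF_conv p u
    _ = PhiBar (q / Real.sqrt (1 + p ^ 2)) := by
        rw [integral_Ici_eq_integral_Ioi, integral_const_mul]
        simp_rw [div_eq_inv_mul]
        rw [integral_comp_mul_left_Ioi gaussPDF q (inv_pos.mpr hsk), inv_inv, smul_eq_mul,
          ← mul_assoc, inv_mul_cancel₀ hsk.ne', one_mul, phiBar_def,
          integral_Ici_eq_integral_Ioi]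

/-- Expectation of the elastic-net prox derivative over the Gauss–Bernoulli prior
and an independent standard Gaussian. -/
theorem enet_prox_deriv_mean (α η wh vh τh θ₀ ν : ℝ)
    (hα : 0 ≤ α) (hη : 0 ≤ η) (hwh : 0 < wh) (hvh : 0 < vh) (hτh : 0 < τh)
    (hθ : 0 < θ₀) (hν : 0 < ν) (hν1 : ν ≤ 1) :
    (∫ b, ∫ z, proxEnetDeriv α η τh (wh * b / θ₀ + vh * z) ∂(gaussianReal 0 1)
        ∂((ENNReal.ofReal (1 - ν)) • Measure.dirac (0 : ℝ) +
          (ENNReal.ofReal ν) • gaussianReal 0 (Real.toNNReal (θ₀ ^ 2 / ν)))) =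
      (1 / (1 + η * τh)) *
        (ν * PhiBar (α * τh / Real.sqrt (vh ^ 2 + wh ^ 2 / ν)) +
          (1 - ν) * PhiBar (α * τh / vh)) * 2 := by
  have hc : 0 ≤ α * τh := mul_nonneg hα hτh.le
  have hd : (0:ℝ) < 1 + η * τh := by positivity
  set K : ℝ := ∫ t, gaussPDF t with hK
  set F : ℝ → ℝ := fun b =>
    (PhiBar ((α * τh - wh * b / θ₀) / vh) + PhiBar ((α * τh + wh * b / θ₀) / vh))
      / (1 + η * τh) with hF
  -- Step 1 : inner integral
  have step1 : ∀ b, (∫ z, proxEnetDeriv α η τh (wh * b / θ₀ + vh * z) ∂(gaussianReal 0 1))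
      = F b := by
    intro b
    simp only [proxEnetDeriv]
    rw [integral_div, integral_gaussianReal_one, integral_gaussPDF_abs_gt _ _ _ hc hvh, hF]
  -- measurability and integrability of F
  have hm : Measurable F := by
    have h1 : Measurable fun b : ℝ => (α * τh - wh * b / θ₀) / vh := by fun_prop
    have h2 : Measurable fun b : ℝ => (α * τh + wh * b / θ₀) / vh := by fun_prop
    exact ((measurable_phiBar.comp h1).add (measurable_phiBar.comp h2)).div_const _
  have hFi : ∀ (μ : Measure ℝ) [IsFiniteMeasure μ], Integrable F μ := by
    intro μ _
    refine Integrable.mono' (integrable_const ((K + K) / (1 + η * τh)))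
      hm.aestronglyMeasurable (Filter.Eventually.of_forall fun b => ?_)
    rw [Real.norm_eq_abs, abs_of_nonneg (by
      exact div_nonneg (add_nonneg (phiBar_nonneg _) (phiBar_nonneg _)) hd.le)]
    simp only [hF]
    apply div_le_div_of_nonneg_right ?_ hd.le
    exact add_le_add (phiBar_le _) (phiBar_le _)
  -- Step 2 : split the measure
  simp_rw [step1]
  rw [integral_add_measure
      ((hFi _).smul_measure ENNReal.ofReal_ne_top)
      ((hFi _).smul_measure ENNReal.ofReal_ne_top),
    integral_smul_measure, integral_smul_measure, integral_dirac,
    ENNReal.toReal_ofReal (by linarith), ENNReal.toReal_ofReal hν.le]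
  -- Step 3 : Gaussian part via scaling
  set σ : ℝ := Real.sqrt (θ₀ ^ 2 / ν) with hσdef
  have hσpos : 0 < σ := Real.sqrt_pos.mpr (by positivity)
  have hσ2 : σ ^ 2 = θ₀ ^ 2 / ν := Real.sq_sqrt (by positivity)
  have hmap : (gaussianReal 0 1).map (σ * ·) = gaussianReal 0 (Real.toNNReal (θ₀ ^ 2 / ν)) := by
    rw [gaussianReal_map_const_mul σ, mul_zero]
    congr 1
    ext
    rw [NNReal.coe_mul, NNReal.coe_one, mul_one]
    rw [Real.coe_toNNReal _ (by positivity)]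
    exact hσ2
  have hgauss : ∫ b, F b ∂(gaussianReal 0 (Real.toNNReal (θ₀ ^ 2 / ν)))
      = 2 * PhiBar (α * τh / Real.sqrt (vh ^ 2 + wh ^ 2 / ν)) / (1 + η * τh) := by
    rw [← hmap, integral_map (measurable_const_mul σ).aemeasurable hm.aestronglyMeasurable]
    set P : ℝ := wh * σ / (θ₀ * vh) with hP
    set Q : ℝ := α * τh / vh with hQ
    have hFσ : ∀ z, F (σ * z) = (PhiBar (Q + (-P) * z) + PhiBar (Q + P * z)) / (1 + η * τh) := by
      intro z
      have e1 : (α * τh - wh * (σ * z) / θ₀) / vh = Q + (-P) * z := by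
        rw [hQ, hP]; field_simp; ring
      have e2 : (α * τh + wh * (σ * z) / θ₀) / vh = Q + P * z := by
        rw [hQ, hP]; field_simp
      simp only [hF]
      rw [e1, e2]
    simp_rw [hFσ]
    have hInt : ∀ p q : ℝ, Integrable (fun z => gaussPDF z * PhiBar (q + p * z)) := by
      intro p q
      refine Integrable.mono' (integrable_gaussPDF.const_mul K)
        ((continuous_gaussPDF.measurable.mul
          (measurable_phiBar.comp (by fun_prop))).aestronglyMeasurable)
        (Filter.Eventually.of_forall fun z => ?_)
      rw [Real.norm_eq_abs, abs_of_nonneg (mul_nonneg (gaussPDF_nonneg _) (phiBar_nonneg _)),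
        mul_comm K]
      exact mul_le_mul_of_nonneg_left (phiBar_le _) (gaussPDF_nonneg _)
    rw [integral_gaussianReal_one]
    simp_rw [← mul_div_assoc]
    rw [integral_div]
    simp_rw [mul_add]
    rw [integral_add (hInt _ _) (hInt _ _), gauss_phiBar, gauss_phiBar, neg_sq]
    have harg : Q / Real.sqrt (1 + P ^ 2)
        = α * τh / Real.sqrt (vh ^ 2 + wh ^ 2 / ν) := by
      have hP2 : P ^ 2 = wh ^ 2 / (ν * vh ^ 2) := by
        rw [hP, div_pow, mul_pow, hσ2]
        field_simp
      have h1 : 1 + P ^ 2 = (vh ^ 2 + wh ^ 2 / ν) / vh ^ 2 := by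
        rw [hP2]; field_simp
      rw [h1, Real.sqrt_div (by positivity) _, Real.sqrt_sq hvh.le, hQ]
      have hX : 0 < Real.sqrt (vh ^ 2 + wh ^ 2 / ν) := Real.sqrt_pos.mpr (by positivity)
      field_simp
    rw [harg]
    ring
  rw [hgauss, hF]
  simp only [mul_zero, zero_div, sub_zero, add_zero]
  rw [smul_eq_mul, smul_eq_mul]
  ring
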